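/- Let m ≥ 1, let D_1,…,D_m ≥ 1 be integers with n = D_1+…+D_m, and let a ≥ 1 be an integer. For every label word w ∈ {1,…,m}^n containing exactly D_t entries equal to t for each t, the number of words f : {1,…,n} → {1,…,a} with v(f) = w satisfies #{f : v(f) = w*} ≤ #{f : v(f) = w} ≤ #{f : v(f) = v_0}, where v_0 is the sorted pattern (D_1 ones, then D_2 twos, …, then D_m m's) and w* is the reversed pattern (D_m m's, then D_{m-1} (m-1)'s, …, then D_1 ones). In particular, under an a-shuffle of the sorted deck the most likely pattern is v_0, the least likely is w*, and the separation distance is achieved at w*. -/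

import Mathlib

/-- Bayer–Diaconis encoding: for a shuffle word `f : Fin n → Fin a`, the card at final
position `i` originally occupied 1-based position `pos f i`. -/
def pos {n a : ℕ} (f : Fin n → Fin a) (i : Fin n) : ℕ :=
  (Finset.univ.filter fun j => f j < f i).card +
    (Finset.univ.filter fun j => j ≤ i ∧ f j = f i).card

/-- Partial sums of the pile sizes `D 0, D 1, …` (0-indexed: `D t` is the paper's `D_{t+1}`). -/
def dPrefix (D : ℕ → ℕ) (t : ℕ) : ℕ := ∑ s ∈ Finset.range t, D s

/-- The (0-based) label carried by 0-based original position `q` in the sorted deck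
`D 0` cards labelled `0`, then `D 1` cards labelled `1`, …, `D (m-1)` cards labelled `m-1`. -/
def labelOf (D : ℕ → ℕ) (m q : ℕ) : ℕ :=
  ((Finset.range m).filter fun t => dPrefix D (t + 1) ≤ q).card

/-- The label pattern `v(f)` produced by the shuffle word `f` from the sorted deck. -/
def vpat (D : ℕ → ℕ) (m : ℕ) {n a : ℕ} (f : Fin n → Fin a) : Fin n → ℕ :=
  fun i => labelOf D m (pos f i - 1)

open Finset

section Aux

variable {n a : ℕ}

/-- The lexicographic reading order of the Bayer–Diaconis encoding. -/
def lexr (f : Fin n → Fin a) (i j : Fin n) : Prop :=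
  f i < f j ∨ (f i = f j ∧ i < j)

instance (f : Fin n → Fin a) (i j : Fin n) : Decidable (lexr f i j) :=
  inferInstanceAs (Decidable (_ ∨ _))

theorem lexr_irrefl (f : Fin n → Fin a) (i : Fin n) : ¬ lexr f i i := by
  simp [lexr]

theorem lexr_trans {f : Fin n → Fin a} {i j k : Fin n}
    (h1 : lexr f i j) (h2 : lexr f j k) : lexr f i k := by
  rcases h1 with h1 | ⟨h1, h1'⟩ <;> rcases h2 with h2 | ⟨h2, h2'⟩
  · exact Or.inl (h1.trans h2)
  · exact Or.inl (lt_of_lt_of_le h1 (le_of_eq h2))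
  · exact Or.inl (lt_of_le_of_lt (le_of_eq h1) h2)
  · exact Or.inr ⟨h1.trans h2, h1'.trans h2'⟩

theorem lexr_total {f : Fin n → Fin a} {i j : Fin n} (h : i ≠ j) :
    lexr f i j ∨ lexr f j i := by
  rcases lt_trichotomy (f i) (f j) with h1 | h1 | h1
  · exact Or.inl (Or.inl h1)
  · rcases lt_or_gt_of_ne h with h2 | h2
    · exact Or.inl (Or.inr ⟨h1, h2⟩)
    · exact Or.inr (Or.inr ⟨h1.symm, h2⟩)
  · exact Or.inr (Or.inl h1)

/-- Rank of position `i` in the reading order. -/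
def rk (f : Fin n → Fin a) (i : Fin n) : ℕ :=
  (Finset.univ.filter fun j => lexr f j i).card

theorem pos_eq_rk (f : Fin n → Fin a) (i : Fin n) : pos f i = rk f i + 1 := by
  have h1 : (Finset.univ.filter fun j => j ≤ i ∧ f j = f i)
      = insert i (Finset.univ.filter fun j => f j = f i ∧ j < i) := by
    ext j
    simp only [mem_filter, mem_univ, true_and, mem_insert]
    constructor
    · rintro ⟨hle, he⟩
      rcases eq_or_lt_of_le hle with h | h
      · exact Or.inl (Fin.eq_of_val_eq (by exact_mod_cast congrArg Fin.val h))
      · exact Or.inr ⟨he, h⟩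
    · rintro (rfl | ⟨he, hlt⟩)
      · exact ⟨le_refl _, rfl⟩
      · exact ⟨le_of_lt hlt, he⟩
  have h2 : i ∉ (Finset.univ.filter fun j => f j = f i ∧ j < i) := by
    simp
  have h3 : (Finset.univ.filter fun j => lexr f j i)
      = (Finset.univ.filter fun j => f j < f i) ∪
        (Finset.univ.filter fun j => f j = f i ∧ j < i) := by
    ext j; rw [mem_union, mem_filter, mem_filter, mem_filter]; simp only [mem_univ, true_and, lexr]
  have h4 : Disjoint (Finset.univ.filter fun j => f j < f i)
      (Finset.univ.filter fun j => f j = f i ∧ j < i) := by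
    rw [Finset.disjoint_filter]
    rintro x _ hlt ⟨heq, _⟩
    exact absurd heq (ne_of_lt hlt)
  rw [pos, h1, Finset.card_insert_of_notMem h2, rk, h3,
    Finset.card_union_of_disjoint h4]
  omega

theorem rk_lt_of_lexr {f : Fin n → Fin a} {i j : Fin n} (h : lexr f i j) :
    rk f i < rk f j := by
  have hsub : insert i (Finset.univ.filter fun k => lexr f k i)
      ⊆ Finset.univ.filter fun k => lexr f k j := by
    intro k hk
    rcases Finset.mem_insert.mp hk with rfl | hk
    · simp only [mem_filter, mem_univ, true_and]; exact h
    · simp only [mem_filter, mem_univ, true_and] at hk ⊢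
      exact lexr_trans hk h
  have hnot : i ∉ (Finset.univ.filter fun k => lexr f k i) := by
    simp only [mem_filter, mem_univ, true_and]
    exact lexr_irrefl f i
  calc rk f i < rk f i + 1 := Nat.lt_succ_self _
    _ = (insert i (Finset.univ.filter fun k => lexr f k i)).card := by
        rw [Finset.card_insert_of_notMem hnot, rk]
    _ ≤ rk f j := Finset.card_le_card hsub

theorem lexr_iff_rk {f : Fin n → Fin a} {i j : Fin n} :
    lexr f i j ↔ rk f i < rk f j := by
  constructor
  · exact rk_lt_of_lexr
  · intro h
    have hne : i ≠ j := by rintro rfl; exact lt_irrefl _ h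
    rcases lexr_total (f := f) hne with h1 | h1
    · exact h1
    · exact absurd (rk_lt_of_lexr h1) (by omega)

theorem rk_lt_n (f : Fin n → Fin a) (i : Fin n) : rk f i < n := by
  have hsub : (Finset.univ.filter fun j => lexr f j i) ⊆ Finset.univ.erase i := by
    intro k hk
    simp only [mem_filter, mem_univ, true_and] at hk
    refine Finset.mem_erase.mpr ⟨?_, Finset.mem_univ _⟩
    rintro rfl; exact lexr_irrefl _ _ hk
  have := Finset.card_le_card hsub
  rw [Finset.card_erase_of_mem (Finset.mem_univ i), Finset.card_univ,
    Fintype.card_fin] at this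
  have hn0 : 0 < n := Nat.pos_of_ne_zero (by rintro rfl; exact i.elim0)
  rw [rk]
  omega

/-- The rank map as an equivalence. -/
noncomputable def rkE (f : Fin n → Fin a) : Fin n ≃ Fin n :=
  Equiv.ofBijective (fun i => ⟨rk f i, rk_lt_n f i⟩)
    (Finite.injective_iff_bijective.mp (by
      intro i j h
      by_contra hne
      rcases lexr_total (f := f) hne with h1 | h1 <;>
        · have := rk_lt_of_lexr h1
          simp only [Fin.mk.injEq] at h
          omega))

theorem rkE_val (f : Fin n → Fin a) (i : Fin n) : (rkE f i : ℕ) = rk f i := rfl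

end Aux

section LabelAux

variable {D : ℕ → ℕ} {m : ℕ}

theorem dPrefix_mono : Monotone (dPrefix D) := fun s t h =>
  Finset.sum_le_sum_of_subset (Finset.range_subset_range.mpr h)

theorem dPrefix_succ (t : ℕ) : dPrefix D (t + 1) = dPrefix D t + D t :=
  Finset.sum_range_succ _ _

theorem labelOf_mono : Monotone (labelOf D m) := by
  intro q q' h
  apply Finset.card_le_card
  apply Finset.monotone_filter_right
  intro t _ ht
  exact le_trans ht h

theorem labelOf_le_iff {t q : ℕ} (ht : t < m) :
    labelOf D m q ≤ t ↔ q < dPrefix D (t + 1) := by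
  constructor
  · intro h
    by_contra hq
    push_neg at hq
    have hsub : Finset.range (t + 1) ⊆
        (Finset.range m).filter fun s => dPrefix D (s + 1) ≤ q := by
      intro s hs
      rw [Finset.mem_range] at hs
      refine Finset.mem_filter.mpr ⟨Finset.mem_range.mpr (by omega), ?_⟩
      exact le_trans (dPrefix_mono (by omega)) hq
    have := Finset.card_le_card hsub
    rw [Finset.card_range] at this
    rw [labelOf] at h
    omega
  · intro hq
    have hsub : ((Finset.range m).filter fun s => dPrefix D (s + 1) ≤ q)
        ⊆ Finset.range t := by
      intro s hs
      rw [Finset.mem_filter, Finset.mem_range] at hs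
      rw [Finset.mem_range]
      by_contra hst
      push_neg at hst
      have : dPrefix D (t + 1) ≤ dPrefix D (s + 1) := dPrefix_mono (by omega)
      omega
    have := Finset.card_le_card hsub
    rw [Finset.card_range] at this
    exact this

theorem labelOf_eq_iff {t q : ℕ} (ht : t < m) :
    labelOf D m q = t ↔ dPrefix D t ≤ q ∧ q < dPrefix D (t + 1) := by
  constructor
  · intro h
    refine ⟨?_, (labelOf_le_iff ht).mp (le_of_eq h)⟩
    by_contra hq
    push_neg at hq
    rcases Nat.eq_zero_or_pos t with rfl | htpos
    · simp [dPrefix] at hq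
    · have h2 : labelOf D m q ≤ t - 1 := by
        apply (labelOf_le_iff (by omega)).mpr
        have : t - 1 + 1 = t := by omega
        rw [this]; exact hq
      omega
  · rintro ⟨h1, h2⟩
    have hle : labelOf D m q ≤ t := (labelOf_le_iff ht).mpr h2
    have hge : t ≤ labelOf D m q := by
      have hsub : Finset.range t ⊆
          (Finset.range m).filter fun s => dPrefix D (s + 1) ≤ q := by
        intro s hs
        rw [Finset.mem_range] at hs
        refine Finset.mem_filter.mpr ⟨Finset.mem_range.mpr (by omega), ?_⟩
        exact le_trans (dPrefix_mono (by omega)) h1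
      have := Finset.card_le_card hsub
      rw [Finset.card_range] at this
      exact this
    omega

theorem labelOf_lt (hm : 1 ≤ m) {q : ℕ} (hq : q < dPrefix D m) :
    labelOf D m q < m := by
  have h : labelOf D m q ≤ m - 1 := by
    apply (labelOf_le_iff (by omega)).mpr
    have : m - 1 + 1 = m := by omega
    rw [this]; exact hq
  omega

theorem card_labelOf_fiber {n : ℕ} (hn : n = dPrefix D m) {t : ℕ} (ht : t < m) :
    (Finset.univ.filter fun i : Fin n => labelOf D m (i : ℕ) = t).card = D t := by
  have hstep : (Finset.univ.filter fun i : Fin n => labelOf D m (i : ℕ) = t).card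
      = ((Finset.range n).filter fun q => labelOf D m q = t).card := by
    apply Finset.card_bij (fun (i : Fin n) _ => (i : ℕ))
    · intro i hi
      simp only [Finset.mem_filter, Finset.mem_univ, true_and] at hi
      simp only [Finset.mem_filter, Finset.mem_range]
      exact ⟨i.isLt, hi⟩
    · intro i _ j _ h
      exact Fin.eq_of_val_eq h
    · intro q hq
      simp only [Finset.mem_filter, Finset.mem_range] at hq
      exact ⟨⟨q, hq.1⟩, Finset.mem_filter.mpr ⟨Finset.mem_univ _, hq.2⟩, rfl⟩
  have hsucc : dPrefix D (t + 1) ≤ n := hn ▸ dPrefix_mono (by omega)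
  have hIco : ((Finset.range n).filter fun q => labelOf D m q = t)
      = Finset.Ico (dPrefix D t) (dPrefix D (t + 1)) := by
    ext q
    simp only [Finset.mem_filter, Finset.mem_range, Finset.mem_Ico,
      labelOf_eq_iff ht]
    omega
  rw [hstep, hIco, Nat.card_Ico, dPrefix_succ]
  omega

end LabelAux

section CountAux

variable {n : ℕ}

theorem count_ofFn' (g : Fin n → ℕ) (t : ℕ) :
    List.count t (List.ofFn g) = (Finset.univ.filter fun i => g i = t).card := by
  have h1 : (List.ofFn g : Multiset ℕ) = Finset.univ.val.map g := (Fin.univ_val_map g).symm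
  calc List.count t (List.ofFn g)
      = Multiset.count t (List.ofFn g : Multiset ℕ) := (Multiset.coe_count t _).symm
    _ = Multiset.count t (Finset.univ.val.map g) := by rw [h1]
    _ = Multiset.card (Finset.univ.val.filter (fun i => t = g i)) := Multiset.count_map _ _ _
    _ = (Finset.univ.filter fun i => t = g i).card := rfl
    _ = (Finset.univ.filter fun i => g i = t).card := by
        congr 1; apply Finset.filter_congr; intro x _; exact eq_comm

theorem monotone_eq_of_counts {g h : Fin n → ℕ} (hg : Monotone g) (hh : Monotone h)
    (hc : ∀ t, (Finset.univ.filter fun i => g i = t).card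
        = (Finset.univ.filter fun i => h i = t).card) : g = h := by
  apply List.ofFn_injective
  apply List.Perm.eq_of_sortedLE hg.sortedLE_ofFn hh.sortedLE_ofFn
  rw [List.perm_iff_count]
  intro t
  rw [count_ofFn', count_ofFn', hc]

theorem count_comp_equiv (σ : Equiv.Perm (Fin n)) (g : Fin n → ℕ) (t : ℕ) :
    (Finset.univ.filter fun i => g (σ i) = t).card
      = (Finset.univ.filter fun i => g i = t).card := by
  apply Finset.card_bij (fun (i : Fin n) _ => σ i)
  · intro i hi
    simp only [Finset.mem_filter, Finset.mem_univ, true_and] at hi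
    simp only [Finset.mem_filter, Finset.mem_univ, true_and]
    exact hi
  · intro i _ j _ h
    exact σ.injective h
  · intro q hq
    simp only [Finset.mem_filter, Finset.mem_univ, true_and] at hq
    exact ⟨σ.symm q, Finset.mem_filter.mpr ⟨Finset.mem_univ _, by simpa using hq⟩,
      Equiv.apply_symm_apply σ q⟩

theorem all_lt_of_counts {m : ℕ} (hm : 1 ≤ m) {D : ℕ → ℕ} (hD : ∀ t < m, 1 ≤ D t)
    (hn : n = ∑ t ∈ Finset.range m, D t) {w : Fin n → ℕ}
    (hw : ∀ t < m, (Finset.univ.filter fun i => w i = t).card = D t) :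
    ∀ i, w i < m := by
  by_contra hcon
  push_neg at hcon
  obtain ⟨i₀, hi₀⟩ := hcon
  have hdisj : ∀ t₁ ∈ Finset.range m, ∀ t₂ ∈ Finset.range m, t₁ ≠ t₂ →
      Disjoint (Finset.univ.filter fun i => w i = t₁)
        (Finset.univ.filter fun i => w i = t₂) := by
    intro t₁ _ t₂ _ hne
    rw [Finset.disjoint_filter]
    intro x _ h1 h2
    exact hne (h1.symm.trans h2)
  have hcard : ((Finset.range m).biUnion fun t =>
      Finset.univ.filter fun i => w i = t).card = ∑ t ∈ Finset.range m, D t := by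
    rw [Finset.card_biUnion hdisj]
    exact Finset.sum_congr rfl fun t ht => hw t (Finset.mem_range.mp ht)
  have hsub : ((Finset.range m).biUnion fun t =>
      Finset.univ.filter fun i => w i = t) ⊆ Finset.univ.erase i₀ := by
    intro i hi
    rw [Finset.mem_biUnion] at hi
    obtain ⟨t, ht, hit⟩ := hi
    rw [Finset.mem_filter] at hit
    refine Finset.mem_erase.mpr ⟨?_, Finset.mem_univ _⟩
    rintro rfl
    rw [Finset.mem_range] at ht
    omega
  have hle := Finset.card_le_card hsub
  rw [hcard, Finset.card_erase_of_mem (Finset.mem_univ i₀), Finset.card_univ,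
    Fintype.card_fin] at hle
  rw [← hn] at hle
  have hn1 : 1 ≤ ∑ t ∈ Finset.range m, D t :=
    le_trans (hD 0 hm)
      (Finset.single_le_sum (fun t _ => Nat.zero_le _) (Finset.mem_range.mpr hm))
  omega

end CountAux

section Charac

variable {n a : ℕ} {D : ℕ → ℕ} {m : ℕ}

theorem vpat_eq_iff (hm : 1 ≤ m) (hD : ∀ t < m, 1 ≤ D t)
    (hn : n = ∑ t ∈ Finset.range m, D t) {w : Fin n → ℕ}
    (hw : ∀ t < m, (Finset.univ.filter fun i => w i = t).card = D t)
    (f : Fin n → Fin a) :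
    vpat D m f = w ↔ ∀ i j, lexr f i j → w i ≤ w j := by
  have hvpat : ∀ i, vpat D m f i = labelOf D m (rk f i) := by
    intro i
    rw [vpat, pos_eq_rk, Nat.add_sub_cancel]
  constructor
  · intro h i j hij
    rw [← h]
    rw [hvpat, hvpat]
    exact labelOf_mono (le_of_lt (rk_lt_of_lexr hij))
  · intro hC
    have hnP : n = dPrefix D m := hn
    set e := rkE f with he
    set u : Fin n → ℕ := w ∘ e.symm with hu
    have hwlt : ∀ i, w i < m := all_lt_of_counts hm hD hn hw
    have humono : Monotone u := by
      intro p q hpq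
      rcases eq_or_lt_of_le hpq with rfl | hlt
      · exact le_refl _
      · have key : ∀ r : Fin n, rk f (e.symm r) = (r : ℕ) := fun r =>
          congrArg Fin.val (e.apply_symm_apply r)
        apply hC
        rw [lexr_iff_rk, key p, key q]
        exact hlt
    have hlmono : Monotone (fun i : Fin n => labelOf D m (i : ℕ)) := by
      intro i j hij
      exact labelOf_mono (by exact_mod_cast hij)
    have hcounts : ∀ t, (Finset.univ.filter fun i => u i = t).card
        = (Finset.univ.filter fun i : Fin n => labelOf D m (i : ℕ) = t).card := by
      intro t
      by_cases ht : t < m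
      · have h1 : (Finset.univ.filter fun i => u i = t).card
            = (Finset.univ.filter fun i => w (e.symm i) = t).card := rfl
        rw [h1, count_comp_equiv e.symm w t, hw t ht, card_labelOf_fiber hnP ht]
      · rw [Finset.filter_eq_empty_iff.mpr, Finset.filter_eq_empty_iff.mpr]
        · intro i _
          have : labelOf D m (i : ℕ) < m := labelOf_lt hm (hnP ▸ i.isLt)
          omega
        · intro i _
          have := hwlt (e.symm i)
          rw [hu]
          simp only [Function.comp_apply]
          omega
    have hueq : u = fun i : Fin n => labelOf D m (i : ℕ) :=
      monotone_eq_of_counts humono hlmono hcounts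
    funext i
    rw [hvpat]
    have h2 : u (e i) = w i := by
      rw [hu]
      simp only [Function.comp_apply, Equiv.symm_apply_apply]
    rw [← h2, hueq]
    rfl

end Charac


section Inject

variable {n a : ℕ}

theorem card_cond_le (w1 w2 : Fin n → ℕ) (σ : Equiv.Perm (Fin n))
    (key : ∀ f : Fin n → Fin a, (∀ i j, lexr f i j → w1 i ≤ w1 j) →
      ∀ i j, lexr (f ∘ σ) i j → w2 i ≤ w2 j) :
    (Finset.univ.filter fun f : Fin n → Fin a => ∀ i j, lexr f i j → w1 i ≤ w1 j).card ≤
      (Finset.univ.filter fun f : Fin n → Fin a => ∀ i j, lexr f i j → w2 i ≤ w2 j).card := by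
  apply Finset.card_le_card_of_injOn (fun f => f ∘ σ)
  · intro f hf
    simp only [Finset.mem_coe, Finset.mem_filter, Finset.mem_univ, true_and] at hf ⊢
    exact key f hf
  · intro f _ g _ h
    funext x
    have h2 := congrFun h (σ.symm x)
    simp only [Function.comp_apply, Equiv.apply_symm_apply] at h2
    exact h2

theorem key_mono {w1 w2 : Fin n → ℕ} (σ : Equiv.Perm (Fin n)) (hσ : w1 ∘ σ = w2)
    (hmono : Monotone w2) (f : Fin n → Fin a)
    (h : ∀ i j, lexr f i j → w1 i ≤ w1 j) :
    ∀ i j, lexr (f ∘ σ) i j → w2 i ≤ w2 j := by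
  intro i j hij
  rcases hij with hlt | ⟨_, hij⟩
  · rw [← hσ]
    exact h (σ i) (σ j) (Or.inl hlt)
  · exact hmono (le_of_lt hij)

theorem key_anti {w1 w2 : Fin n → ℕ} (σ : Equiv.Perm (Fin n)) (hσ : w1 ∘ σ = w2)
    (hanti : Antitone w1) (f : Fin n → Fin a)
    (h : ∀ i j, lexr f i j → w1 i ≤ w1 j) :
    ∀ i j, lexr (f ∘ σ) i j → w2 i ≤ w2 j := by
  intro i j hij
  rw [← hσ]
  simp only [Function.comp_apply]
  rcases hij with hlt | ⟨heq, hij⟩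
  · exact h _ _ (Or.inl hlt)
  · rcases lt_trichotomy (σ i) (σ j) with h1 | h1 | h1
    · exact h _ _ (Or.inr ⟨heq, h1⟩)
    · exact le_of_eq (congrArg w1 h1)
    · exact hanti (le_of_lt h1)

end Inject

theorem statement10 (m : ℕ) (hm : 1 ≤ m) (D : ℕ → ℕ) (hD : ∀ t < m, 1 ≤ D t)
    (a : ℕ) (ha : 1 ≤ a) (n : ℕ) (hn : n = ∑ t ∈ Finset.range m, D t)
    (w : Fin n → ℕ)
    (hw : ∀ t < m, (Finset.univ.filter fun i => w i = t).card = D t) :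
    ((Finset.univ.filter fun f : Fin n → Fin a =>
        vpat D m f = fun i : Fin n => labelOf D m (n - 1 - (i : ℕ))).card ≤
      (Finset.univ.filter fun f : Fin n → Fin a => vpat D m f = w).card) ∧
    ((Finset.univ.filter fun f : Fin n → Fin a => vpat D m f = w).card ≤
      (Finset.univ.filter fun f : Fin n → Fin a =>
        vpat D m f = fun i : Fin n => labelOf D m (i : ℕ)).card) ∧
    (1 - (n.factorial : ℝ) / (∏ t ∈ Finset.range m, ((D t).factorial : ℝ)) *
        (((Finset.univ.filter fun f : Fin n → Fin a =>
          vpat D m f = w).card : ℝ) / (a : ℝ) ^ n) ≤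
      1 - (n.factorial : ℝ) / (∏ t ∈ Finset.range m, ((D t).factorial : ℝ)) *
        (((Finset.univ.filter fun f : Fin n → Fin a =>
          vpat D m f = fun i : Fin n => labelOf D m (n - 1 - (i : ℕ))).card : ℝ) /
            (a : ℝ) ^ n)) := by
  have hnP : n = dPrefix D m := hn
  set v0 : Fin n → ℕ := fun i : Fin n => labelOf D m (i : ℕ) with hv0def
  set ws : Fin n → ℕ := fun i : Fin n => labelOf D m (n - 1 - (i : ℕ)) with hwsdef
  have hn1 : 1 ≤ n := by
    rw [hn]
    exact le_trans (hD 0 hm)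
      (Finset.single_le_sum (fun t _ => Nat.zero_le _) (Finset.mem_range.mpr hm))
  -- contents
  have hv0c : ∀ t < m, (Finset.univ.filter fun i => v0 i = t).card = D t := by
    intro t ht
    simp only [hv0def]
    exact card_labelOf_fiber hnP ht
  -- the reversal permutation
  have hinv : Function.Involutive (fun i : Fin n =>
      (⟨n - 1 - (i : ℕ), by have := i.isLt; omega⟩ : Fin n)) := by
    intro i
    apply Fin.eq_of_val_eq
    have := i.isLt
    simp only []
    omega
  set neg : Equiv.Perm (Fin n) := hinv.toPerm _ with hnegdef
  have hneg_apply : ∀ i : Fin n, ((neg i : Fin n) : ℕ) = n - 1 - (i : ℕ) := fun i => rfl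
  have hws_eq : ws = v0 ∘ neg := by
    funext i
    simp only [hwsdef, hv0def, Function.comp_apply, hneg_apply]
  have hwsc : ∀ t < m, (Finset.univ.filter fun i => ws i = t).card = D t := by
    intro t ht
    have h1 : (Finset.univ.filter fun i => ws i = t).card
        = (Finset.univ.filter fun i => v0 (neg i) = t).card := by
      simp only [hws_eq, Function.comp_apply]
    rw [h1, count_comp_equiv neg v0 t]
    exact hv0c t ht
  -- monotonicity
  have hv0mono : Monotone v0 := by
    intro i j hij
    simp only [hv0def]
    exact labelOf_mono (by exact_mod_cast hij)
  have hws_anti : Antitone ws := by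
    intro i j hij
    simp only [hwsdef]
    apply labelOf_mono
    have : (i : ℕ) ≤ (j : ℕ) := hij
    omega
  -- values below m
  have hwlt : ∀ i, w i < m := all_lt_of_counts hm hD hn hw
  have hv0lt : ∀ i : Fin n, v0 i < m := by
    intro i
    simp only [hv0def]
    exact labelOf_lt hm (hnP ▸ i.isLt)
  have hwslt : ∀ i : Fin n, ws i < m := by
    intro i
    rw [hws_eq]
    exact hv0lt (neg i)
  -- counts for all t
  have hcnt : ∀ (w' : Fin n → ℕ), (∀ t < m, (Finset.univ.filter fun i => w' i = t).card = D t) →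
      (∀ i, w' i < m) → ∀ t, (Finset.univ.filter fun i => w' i = t).card
        = (Finset.univ.filter fun i => v0 i = t).card := by
    intro w' hc hlt t
    by_cases ht : t < m
    · rw [hc t ht, hv0c t ht]
    · rw [Finset.filter_eq_empty_iff.mpr, Finset.filter_eq_empty_iff.mpr]
      · intro i _
        have := hv0lt i
        omega
      · intro i _
        have := hlt i
        omega
  -- sorted versions agree with v0
  have hsort : ∀ (w' : Fin n → ℕ),
      (∀ t, (Finset.univ.filter fun i => w' i = t).card
        = (Finset.univ.filter fun i => v0 i = t).card) →
      w' ∘ Tuple.sort w' = v0 := by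
    intro w' hc
    apply monotone_eq_of_counts (Tuple.monotone_sort w') hv0mono
    intro t
    have h1 : (Finset.univ.filter fun i => (w' ∘ Tuple.sort w') i = t).card
        = (Finset.univ.filter fun i => w' (Tuple.sort w' i) = t).card := rfl
    rw [h1, count_comp_equiv (Tuple.sort w') w' t]
    exact hc t
  have hsort_w : w ∘ Tuple.sort w = v0 := hsort w (hcnt w hw hwlt)
  have hsort_ws : ws ∘ Tuple.sort ws = v0 := hsort ws (hcnt ws hwsc hwslt)
  -- filter equality
  have hfe : ∀ (w' : Fin n → ℕ), (∀ t < m, (Finset.univ.filter fun i => w' i = t).card = D t) →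
      (Finset.univ.filter fun f : Fin n → Fin a => vpat D m f = w')
        = (Finset.univ.filter fun f : Fin n → Fin a => ∀ i j, lexr f i j → w' i ≤ w' j) := by
    intro w' hw'
    ext f
    simp only [Finset.mem_filter, Finset.mem_univ, true_and]
    exact vpat_eq_iff hm hD hn hw' f
  -- upper bound
  have upper : (Finset.univ.filter fun f : Fin n → Fin a => vpat D m f = w).card ≤
      (Finset.univ.filter fun f : Fin n → Fin a => vpat D m f = v0).card := by
    rw [hfe w hw, hfe v0 hv0c]
    exact card_cond_le w v0 (Tuple.sort w) (key_mono (Tuple.sort w) hsort_w hv0mono)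
  -- lower bound
  have hτ : ws ∘ ((Tuple.sort w).symm.trans (Tuple.sort ws)) = w := by
    funext i
    have h1 : (ws ∘ (Tuple.sort ws)) ((Tuple.sort w).symm i) = v0 ((Tuple.sort w).symm i) :=
      congrFun hsort_ws _
    have h2 : (w ∘ (Tuple.sort w)) ((Tuple.sort w).symm i) = v0 ((Tuple.sort w).symm i) :=
      congrFun hsort_w _
    simp only [Function.comp_apply, Equiv.trans_apply] at h1 h2 ⊢
    rw [Equiv.apply_symm_apply] at h2
    rw [h1, ← h2]
  have lower : (Finset.univ.filter fun f : Fin n → Fin a => vpat D m f = ws).card ≤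
      (Finset.univ.filter fun f : Fin n → Fin a => vpat D m f = w).card := by
    rw [hfe ws hwsc, hfe w hw]
    exact card_cond_le ws w _ (key_anti _ hτ hws_anti)
  refine ⟨lower, upper, ?_⟩
  -- separation distance part
  have hc : (0:ℝ) ≤ (n.factorial : ℝ) / (∏ t ∈ Finset.range m, ((D t).factorial : ℝ)) := by
    positivity
  have hXY : (((Finset.univ.filter fun f : Fin n → Fin a => vpat D m f = ws).card : ℝ) /
        (a : ℝ) ^ n) ≤
      (((Finset.univ.filter fun f : Fin n → Fin a => vpat D m f = w).card : ℝ) /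
        (a : ℝ) ^ n) := by
    gcongr
  exact sub_le_sub_left (mul_le_mul_of_nonneg_left hXY hc) 1
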